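/- For α > 1, the function x ↦ E_α(x) is log-concave on (0, ∞). -/

import Mathlib

open Real Set

namespace MLaux


/-- coefficients of the Mittag-Leffler series -/
noncomputable def c (α : ℝ) (k : ℕ) : ℝ := 1 / Real.Gamma (α * k + 1)

/-- auxiliary decreasing sequence -/
noncomputable def d (α : ℝ) (k : ℕ) : ℝ := Real.Gamma (α * k + 1) / Real.Gamma (α * k + α)

lemma arg1_pos {α : ℝ} (hα : 0 < α) (k : ℕ) : 0 < α * k + 1 := by positivity

lemma arg2_pos {α : ℝ} (hα : 0 < α) (k : ℕ) : 0 < α * k + α := by positivity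

lemma c_pos {α : ℝ} (hα : 0 < α) (k : ℕ) : 0 < c α k :=
  div_pos one_pos (Real.Gamma_pos_of_pos (arg1_pos hα k))

lemma d_pos {α : ℝ} (hα : 0 < α) (k : ℕ) : 0 < d α k :=
  div_pos (Real.Gamma_pos_of_pos (arg1_pos hα k)) (Real.Gamma_pos_of_pos (arg2_pos hα k))

lemma d_anti {α : ℝ} (hα : 1 < α) : Antitone (d α) := by
  have hα0 : (0:ℝ) < α := lt_trans one_pos hα
  refine antitone_nat_of_succ_le fun n => ?_
  have hu : (0:ℝ) < α * n + 1 := arg1_pos hα0 n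
  have hv : (0:ℝ) < α * n + 2 * α := by positivity
  have ha : (0:ℝ) < α * n + α := arg2_pos hα0 n
  have hb : (0:ℝ) < α * n + 1 + α := by positivity
  set u : ℝ := α * n + 1 with hu_def
  set v : ℝ := α * n + 2 * α with hv_def
  have hden : (0:ℝ) < 2 * α - 1 := by linarith
  set lam : ℝ := α / (2 * α - 1) with hlam_def
  have hlam0 : 0 ≤ lam := by positivity
  have hlam1 : 0 ≤ 1 - lam := by
    rw [sub_nonneg, hlam_def, div_le_one hden]; linarith
  -- log Gamma is convex
  have hcvx := Real.convexOn_log_Gamma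
  have h1 : Real.log (Real.Gamma (α * n + α)) ≤
      lam * Real.log (Real.Gamma u) + (1 - lam) * Real.log (Real.Gamma v) := by
    have h := hcvx.2 (Set.mem_Ioi.mpr hu) (Set.mem_Ioi.mpr hv) hlam0 hlam1 (by ring)
    have harg : lam • u + (1 - lam) • v = α * n + α := by
      simp only [smul_eq_mul, hu_def, hv_def, hlam_def]
      have e : α / (2 * α - 1) * (2 * α - 1) = α := div_mul_cancel₀ _ hden.ne'
      linear_combination (-1 : ℝ) * e
    rw [harg] at h
    simpa [Function.comp, smul_eq_mul] using h
  have h2 : Real.log (Real.Gamma (α * n + 1 + α)) ≤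
      (1 - lam) * Real.log (Real.Gamma u) + lam * Real.log (Real.Gamma v) := by
    have h := hcvx.2 (Set.mem_Ioi.mpr hu) (Set.mem_Ioi.mpr hv) hlam1 hlam0 (by ring)
    have harg : (1 - lam) • u + lam • v = α * n + 1 + α := by
      simp only [smul_eq_mul, hu_def, hv_def, hlam_def]
      have e : α / (2 * α - 1) * (2 * α - 1) = α := div_mul_cancel₀ _ hden.ne'
      linear_combination e
    rw [harg] at h
    simpa [Function.comp, smul_eq_mul] using h
  -- combine
  have hkey : Real.Gamma (α * n + α) * Real.Gamma (α * n + 1 + α) ≤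
      Real.Gamma u * Real.Gamma v := by
    have hGa := Real.Gamma_pos_of_pos ha
    have hGb := Real.Gamma_pos_of_pos hb
    have hGu := Real.Gamma_pos_of_pos hu
    have hGv := Real.Gamma_pos_of_pos hv
    have hlog : Real.log (Real.Gamma (α * n + α) * Real.Gamma (α * n + 1 + α)) ≤
        Real.log (Real.Gamma u * Real.Gamma v) := by
      rw [Real.log_mul hGa.ne' hGb.ne', Real.log_mul hGu.ne' hGv.ne']
      linarith
    exact (Real.log_le_log_iff (by positivity) (by positivity)).mp hlog
  -- conclude
  have hGa := Real.Gamma_pos_of_pos ha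
  have hGv := Real.Gamma_pos_of_pos hv
  show d α (n+1) ≤ d α n
  unfold d
  push_cast
  have e1 : α * (n + 1 : ℝ) + 1 = α * n + 1 + α := by ring
  have e2 : α * (n + 1 : ℝ) + α = α * n + 2 * α := by ring
  rw [e1, e2]
  rw [div_le_div_iff₀ hGv (Real.Gamma_pos_of_pos ha)]
  calc Real.Gamma (α * n + 1 + α) * Real.Gamma (α * n + α)
      = Real.Gamma (α * n + α) * Real.Gamma (α * n + 1 + α) := by ring
    _ ≤ Real.Gamma u * Real.Gamma v := hkey
    _ = Real.Gamma (α * n + 1) * Real.Gamma (α * n + 2 * α) := by rw [hu_def, hv_def]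


noncomputable def b (α : ℝ) (k : ℕ) : ℝ := c α k * d α k / α







lemma b_pos {α : ℝ} (hα : 0 < α) (k : ℕ) : 0 < b α k :=
  div_pos (mul_pos (c_pos hα k) (d_pos hα k)) hα

/-- key coefficient identity -/
lemma succ_c_eq {α : ℝ} (hα : 0 < α) (k : ℕ) :
    ((k : ℝ) + 1) * c α (k + 1) = b α k := by
  have h1 := (arg1_pos hα k).ne'
  have h2 := (arg2_pos hα k).ne'
  have hG1 := (Real.Gamma_pos_of_pos (arg1_pos hα k)).ne'
  have hG2 := (Real.Gamma_pos_of_pos (arg2_pos hα k)).ne'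
  unfold b c d
  have e1 : α * ((k : ℕ) + 1 : ℕ) + 1 = (α * k + α) + 1 := by push_cast; ring
  rw [e1, Real.Gamma_add_one h2]
  field_simp
--#exit
/-- ratio test lemma -/
lemma summable_ratio_aux {e : ℕ → ℝ} {C : ℝ}
    (h : ∀ n : ℕ, ‖e (n + 1)‖ ≤ C / (n + 1) * ‖e n‖) : Summable e := by
  refine summable_of_ratio_norm_eventually_le (r := 1/2) (by norm_num) ?_
  filter_upwards [Filter.eventually_ge_atTop ⌈2 * C⌉₊] with n hn
  refine (h n).trans (mul_le_mul_of_nonneg_right ?_ (norm_nonneg _))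
  have h1 : 2 * C ≤ (⌈2 * C⌉₊ : ℝ) := Nat.le_ceil _
  have h2 : ((⌈2 * C⌉₊ : ℕ) : ℝ) ≤ n := Nat.cast_le.mpr hn
  rw [div_le_iff₀ (by positivity)]
  nlinarith
/-- summability of the main series -/
lemma summable_c {α : ℝ} (hα : 1 < α) (x : ℝ) :
    Summable (fun k : ℕ => c α k * x ^ k) := by
  have hα0 : (0:ℝ) < α := lt_trans one_pos hα
  refine summable_ratio_aux (C := d α 0 * |x| / α) fun n => ?_
  have hc := c_pos hα0
  have hcs : c α (n+1) = c α n * d α n / (α * (n+1)) := by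
    have h := succ_c_eq hα0 n
    unfold b at h
    field_simp at h ⊢
    nlinarith [h]
  rw [norm_mul, norm_mul, norm_pow, norm_pow, Real.norm_eq_abs, Real.norm_eq_abs,
    Real.norm_eq_abs, pow_succ]
  rw [abs_of_pos (hc (n+1)), abs_of_pos (hc n), hcs]
  have hdle : d α n ≤ d α 0 := d_anti hα (Nat.zero_le n)
  have hd0 : 0 < d α n := d_pos hα0 n
  have hxabs : (0:ℝ) ≤ |x| := abs_nonneg x
  have hpow : (0:ℝ) ≤ |x| ^ n := by positivity
  calc c α n * d α n / (α * (n+1)) * (|x| ^ n * |x|)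
      ≤ c α n * d α 0 / (α * (n+1)) * (|x| ^ n * |x|) := by
        gcongr
        exact (hc n).le
    _ = d α 0 * |x| / α / (n + 1) * (c α n * |x| ^ n) := by
        field_simp
lemma summable_b {α : ℝ} (hα : 1 < α) (x : ℝ) :
    Summable (fun k : ℕ => b α k * x ^ k) := by
  have hα0 : (0:ℝ) < α := lt_trans one_pos hα
  refine summable_ratio_aux (C := d α 0 * |x| / α) fun n => ?_
  have hc := c_pos hα0
  have hd := d_pos hα0
  have hb := b_pos hα0
  have hcs : c α (n+1) = c α n * d α n / (α * (n+1)) := by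
    have h := succ_c_eq hα0 n
    unfold b at h
    field_simp at h ⊢
    nlinarith [h]
  rw [norm_mul, norm_mul, norm_pow, Real.norm_eq_abs, Real.norm_eq_abs, Real.norm_eq_abs,
    norm_pow, pow_succ]
  rw [abs_of_pos (hb (n+1)), abs_of_pos (hb n)]
  unfold b
  rw [hcs]
  have hd1le : d α (n+1) ≤ d α n := d_anti hα (Nat.le_succ n)
  have hdle : d α n ≤ d α 0 := d_anti hα (Nat.zero_le n)
  have hxabs : (0:ℝ) ≤ |x| := abs_nonneg x
  calc c α n * d α n / (α * (n+1)) * d α (n+1) / α * (|x| ^ n * |x|)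
      ≤ c α n * d α 0 / (α * (n+1)) * d α n / α * (|x| ^ n * |x|) := by
        have hq : (0:ℝ) ≤ c α n * d α 0 / (α * (n+1)) := le_of_lt (div_pos (mul_pos (hc n) (hd 0)) (by positivity))
        gcongr <;> first
          | exact (hc n).le
          | exact (hd n).le
          | exact (hd (n+1)).le
          | exact hq
          | positivity
    _ = d α 0 * |x| / α / (n + 1) * (c α n * d α n / α * |x| ^ n) := by
        field_simp

lemma summable_D {α : ℝ} (hα : 1 < α) (y : ℝ) :
    Summable (fun k : ℕ => (k : ℝ) * c α k * y ^ (k - 1)) := by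
  have hα0 : (0:ℝ) < α := lt_trans one_pos hα
  rw [← summable_nat_add_iff 1]
  have : (fun n : ℕ => ((n + 1 : ℕ) : ℝ) * c α (n + 1) * y ^ (n + 1 - 1))
      = fun n : ℕ => b α n * y ^ n := by
    funext n
    rw [Nat.add_sub_cancel]
    push_cast
    rw [succ_c_eq hα0 n]
  rw [this]
  exact summable_b hα y

lemma tsum_D_eq {α : ℝ} (hα : 1 < α) (y : ℝ) :
    (∑' k : ℕ, (k : ℝ) * c α k * y ^ (k - 1)) = ∑' k : ℕ, b α k * y ^ k := by
  have hα0 : (0:ℝ) < α := lt_trans one_pos hα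
  rw [Summable.tsum_eq_zero_add (summable_D hα y)]
  simp only [Nat.cast_zero, zero_mul, Nat.cast_add, Nat.cast_one, zero_add,
    Nat.add_sub_cancel]
  exact tsum_congr fun n => by rw [succ_c_eq hα0 n]

lemma hasDerivAt_F {α : ℝ} (hα : 1 < α) {x : ℝ} (hx : 0 < x) :
    HasDerivAt (fun y : ℝ => ∑' k : ℕ, c α k * y ^ k) (∑' k : ℕ, b α k * x ^ k) x := by
  have hα0 : (0:ℝ) < α := lt_trans one_pos hα
  rw [← tsum_D_eq hα x]
  have hR : (0:ℝ) < x + 1 := by linarith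
  refine hasDerivAt_tsum_of_isPreconnected
    (u := fun k : ℕ => (k : ℝ) * c α k * (x + 1) ^ (k - 1))
    (t := Ioo (-(x+1)) (x+1)) (y₀ := x)
    (g := fun k y => c α k * y ^ k)
    (g' := fun k y => (k : ℝ) * c α k * y ^ (k - 1))
    (summable_D hα (x+1)) isOpen_Ioo isPreconnected_Ioo
    (fun k y _ => ?_) (fun k y hy => ?_) ?_ ?_ ?_
  · have h := (hasDerivAt_pow k y).const_mul (c α k)
    convert h using 1
    · rfl
    · ring
  · rcases hy with ⟨hy1, hy2⟩
    have hyabs : |y| ≤ x + 1 := by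
      rw [abs_le]; constructor <;> linarith
    rw [norm_mul, norm_mul, Real.norm_natCast, Real.norm_eq_abs, Real.norm_eq_abs]
    simp only [abs_of_pos (c_pos hα0 k), abs_pow]
    refine mul_le_mul_of_nonneg_left (pow_le_pow_left₀ (abs_nonneg y) hyabs _)
      (mul_nonneg (Nat.cast_nonneg k) (c_pos hα0 k).le)
  · exact ⟨by linarith, by linarith⟩
  · exact summable_c hα x
  · exact ⟨by linarith, by linarith⟩

lemma F_pos {α : ℝ} (hα : 1 < α) {x : ℝ} (hx : 0 ≤ x) :
    0 < ∑' k : ℕ, c α k * x ^ k := by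
  have hα0 : (0:ℝ) < α := lt_trans one_pos hα
  have h0 : 0 < c α 0 * x ^ 0 := by
    rw [pow_zero, mul_one]; exact c_pos hα0 0
  refine lt_of_lt_of_le h0 (Summable.le_tsum (summable_c hα x) 0 fun j _ => ?_)
  exact mul_nonneg (c_pos hα0 j).le (pow_nonneg hx j)

set_option maxHeartbeats 1000000 in
lemma key_ineq {α : ℝ} (hα : 1 < α) {x y : ℝ} (hx : 0 < x) (hxy : x ≤ y) :
    (∑' k : ℕ, b α k * y ^ k) * (∑' k : ℕ, c α k * x ^ k) ≤
    (∑' k : ℕ, b α k * x ^ k) * (∑' k : ℕ, c α k * y ^ k) := by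
  have hα0 : (0:ℝ) < α := lt_trans one_pos hα
  have hy : 0 < y := lt_of_lt_of_le hx hxy
  have Sbx := summable_b hα x
  have Sby := summable_b hα y
  have Scx := summable_c hα x
  have Scy := summable_c hα y
  have nb : ∀ (u : ℝ), 0 ≤ u → ∀ k : ℕ, 0 ≤ b α k * u ^ k :=
    fun u hu k => mul_nonneg (b_pos hα0 k).le (pow_nonneg hu k)
  have nc : ∀ (u : ℝ), 0 ≤ u → ∀ k : ℕ, 0 ≤ c α k * u ^ k :=
    fun u hu k => mul_nonneg (c_pos hα0 k).le (pow_nonneg hu k)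
  have P1 : Summable (fun p : ℕ × ℕ => (b α p.1 * y ^ p.1) * (c α p.2 * x ^ p.2)) :=
    Sby.mul_of_nonneg Scx (nb y hy.le) (nc x hx.le)
  have P2 : Summable (fun p : ℕ × ℕ => (b α p.1 * x ^ p.1) * (c α p.2 * y ^ p.2)) :=
    Sbx.mul_of_nonneg Scy (nb x hx.le) (nc y hy.le)
  rw [Summable.tsum_mul_tsum Sby Scx P1, Summable.tsum_mul_tsum Sbx Scy P2]
  set h : ℕ × ℕ → ℝ := fun p =>
    (b α p.1 * x ^ p.1) * (c α p.2 * y ^ p.2) - (b α p.1 * y ^ p.1) * (c α p.2 * x ^ p.2)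
    with hh
  have Sh : Summable h := P2.sub P1
  have Shsw : Summable (fun p : ℕ × ℕ => h (p.2, p.1)) := by
    have := (Equiv.prodComm ℕ ℕ).summable_iff (f := h)
    exact this.mpr Sh
  have pair : ∀ p : ℕ × ℕ, 0 ≤ h p + h (p.2, p.1) := by
    rintro ⟨m, n⟩
    have expand : h (m, n) + h ((m, n).2, (m, n).1)
        = (c α m * c α n / α) * ((d α m - d α n) * (x ^ m * y ^ n - x ^ n * y ^ m)) := by
      simp only [hh]
      unfold b
      field_simp
      ring
    rw [expand]
    refine mul_nonneg (le_of_lt (div_pos (mul_pos (c_pos hα0 m) (c_pos hα0 n)) hα0)) ?_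
    have powkey : ∀ i j : ℕ, i ≤ j → x ^ j * y ^ i ≤ x ^ i * y ^ j := by
      intro i j hij
      obtain ⟨l, rfl⟩ := Nat.exists_eq_add_of_le hij
      rw [pow_add, pow_add]
      calc x ^ i * x ^ l * y ^ i
          ≤ x ^ i * y ^ l * y ^ i := by
            refine mul_le_mul_of_nonneg_right ?_ (pow_nonneg hy.le i)
            exact mul_le_mul_of_nonneg_left (pow_le_pow_left₀ hx.le hxy l) (pow_nonneg hx.le i)
        _ = x ^ i * (y ^ i * y ^ l) := by ring
    rcases le_total m n with hmn | hmn
    · exact mul_nonneg (sub_nonneg.mpr (d_anti hα hmn)) (sub_nonneg.mpr (powkey m n hmn))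
    · have h1 : d α m - d α n ≤ 0 := sub_nonpos.mpr (d_anti hα hmn)
      have h2 : x ^ m * y ^ n - x ^ n * y ^ m ≤ 0 := sub_nonpos.mpr (powkey n m hmn)
      nlinarith
  have h2 : (0:ℝ) ≤ ∑' p : ℕ × ℕ, (h p + h (p.2, p.1)) := tsum_nonneg pair
  have h3 : (∑' p : ℕ × ℕ, (h p + h (p.2, p.1)))
      = (∑' p : ℕ × ℕ, h p) + ∑' p : ℕ × ℕ, h (p.2, p.1) := Summable.tsum_add Sh Shsw
  have h4 : (∑' p : ℕ × ℕ, h (p.2, p.1)) = ∑' p : ℕ × ℕ, h p := by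
    have := (Equiv.prodComm ℕ ℕ).tsum_eq h
    exact this
  have h5 : (∑' p : ℕ × ℕ, h p)
      = (∑' p : ℕ × ℕ, (b α p.1 * x ^ p.1) * (c α p.2 * y ^ p.2))
        - ∑' p : ℕ × ℕ, (b α p.1 * y ^ p.1) * (c α p.2 * x ^ p.2) := Summable.tsum_sub P2 P1
  linarith

end MLaux

noncomputable def mittagLeffler (α x : ℝ) : ℝ :=
  ∑' k : ℕ, x ^ k / Real.Gamma (α * k + 1)

theorem mittagLeffler_logConcave (α : ℝ) (hα : 1 < α) :
    ConcaveOn ℝ (Set.Ioi (0 : ℝ)) (fun x => Real.log (mittagLeffler α x)) := by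
  have hα0 : (0:ℝ) < α := lt_trans one_pos hα
  have hfun : (fun x => Real.log (mittagLeffler α x))
      = fun x => Real.log (∑' k : ℕ, MLaux.c α k * x ^ k) := by
    funext x
    unfold mittagLeffler MLaux.c
    congr 1
    exact tsum_congr fun k => by rw [one_div, div_eq_inv_mul]
  rw [hfun]
  refine AntitoneOn.concaveOn_of_deriv (convex_Ioi 0) ?_ ?_ ?_
  · intro x hx
    have hx' : (0:ℝ) < x := hx
    exact (((MLaux.hasDerivAt_F hα hx').log
      (MLaux.F_pos hα hx'.le).ne')).continuousAt.continuousWithinAt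
  · rw [interior_Ioi]
    intro x hx
    have hx' : (0:ℝ) < x := hx
    exact (((MLaux.hasDerivAt_F hα hx').log
      (MLaux.F_pos hα hx'.le).ne')).differentiableAt.differentiableWithinAt
  · rw [interior_Ioi]
    intro x hx y hy hxy
    have hx' : (0:ℝ) < x := hx
    have hy' : (0:ℝ) < y := hy
    rw [HasDerivAt.deriv ((MLaux.hasDerivAt_F hα hx').log (MLaux.F_pos hα hx'.le).ne'),
      HasDerivAt.deriv ((MLaux.hasDerivAt_F hα hy').log (MLaux.F_pos hα hy'.le).ne')]
    rw [div_le_div_iff₀ (MLaux.F_pos hα hy'.le) (MLaux.F_pos hα hx'.le)]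
    exact MLaux.key_ineq hα hx' hxy
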